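/- arXiv:1511.02068 — 3 statements merged into one kernel-verified Lean document; each statement's English description precedes it below -/
import Mathlib

section
/- For all real numbers x, x', ξ, α', we have |e(x+α') + e(x)| + |e(x'+ξ) + e(x')| ≤ 4 - 8·(sin(π·‖ξ - α'‖_ℤ / 4))², where e(t) = exp(2πi t) and ‖y‖_ℤ denotes the distance from y to the nearest integer. -/
open Complex Real

/-- `e(t) = exp(2πit)`. -/
noncomputable def e (t : ℝ) : ℂ := Complex.exp (2 * Real.pi * Complex.I * t)

lemma e_abs_add_one (t : ℝ) : ‖e t + 1‖ = 2 * |Real.cos (Real.pi * t)| := by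
  have h : e t + 1 = Complex.exp (Real.pi * Complex.I * t) *
      (Complex.exp ((Real.pi * t : ℝ) * Complex.I) + Complex.exp (-(Real.pi * t : ℝ) * Complex.I)) := by
    rw [e, mul_add, ← Complex.exp_add, ← Complex.exp_add]
    push_cast
    ring_nf
    rw [Complex.exp_zero]
    ring_nf
  rw [h, ← Complex.two_cos, norm_mul, Complex.norm_exp]
  have h1 : (Real.pi * Complex.I * t).re = 0 := by simp
  rw [h1, Real.exp_zero, one_mul]
  rw [← Complex.ofReal_cos, norm_mul, Complex.norm_real]
  simp

lemma abs_e_add (s t : ℝ) : ‖e (s + t) + e s‖ = 2 * |Real.cos (Real.pi * t)| := by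
  have h : e (s + t) + e s = e s * (e t + 1) := by
    rw [e, e, e, mul_add, ← Complex.exp_add, mul_one]
    push_cast
    ring_nf
  rw [h, norm_mul]
  have h1 : ‖e s‖ = 1 := by
    rw [e, Complex.norm_exp]
    simp
  rw [h1, one_mul, e_abs_add_one]

lemma abs_cos_eq (t : ℝ) :
    |Real.cos (Real.pi * t)| = Real.sin (Real.pi * |t + 1/2 - round (t + 1/2)|) := by
  set m : ℤ := round (t + 1/2) with hm
  set y : ℝ := t + 1/2 - m with hy
  have ht : Real.pi * t = (Real.pi * y - Real.pi/2) + m * Real.pi := by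
    rw [hy]; push_cast; ring
  rw [ht, Real.cos_add_int_mul_pi, abs_mul]
  have h1 : |((-1 : ℝ)) ^ m| = 1 := by
    rcases Int.even_or_odd m with he | he
    · rw [he.neg_one_zpow]; simp
    · rw [Odd.neg_one_zpow he]; simp
  rw [h1, one_mul]
  have h2 : Real.pi * y - Real.pi / 2 = -(Real.pi/2 - Real.pi * y) := by ring
  rw [h2, Real.cos_neg, Real.cos_pi_div_two_sub]
  have hy2 : |y| ≤ 1/2 := by rw [hy, hm]; exact abs_sub_round _
  clear_value y m
  have hπ := Real.pi_pos
  rcases abs_cases y with ⟨ha, hy0⟩ | ⟨ha, hy0⟩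
  · rw [ha]
    exact abs_of_nonneg (Real.sin_nonneg_of_nonneg_of_le_pi (by nlinarith) (by nlinarith))
  · rw [ha, show Real.pi * -y = -(Real.pi * y) by ring, Real.sin_neg]
    have hs : Real.sin (Real.pi * y) ≤ 0 := by
      rw [show Real.pi * y = -(Real.pi * -y) by ring, Real.sin_neg, neg_nonpos]
      rw [ha] at hy2
      exact Real.sin_nonneg_of_nonneg_of_le_pi (by nlinarith)
        (by nlinarith [mul_le_mul_of_nonneg_left hy2 Real.pi_pos.le, Real.pi_pos])
    rw [abs_of_nonpos hs]

lemma real_sin_add_sin (u v : ℝ) :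
    Real.sin u + Real.sin v = 2 * Real.sin ((u + v) / 2) * Real.cos ((u - v) / 2) := by
  have h1 := Real.sin_add ((u + v) / 2) ((u - v) / 2)
  have h2 := Real.sin_sub ((u + v) / 2) ((u - v) / 2)
  rw [show (u + v) / 2 + (u - v) / 2 = u by ring] at h1
  rw [show (u + v) / 2 - (u - v) / 2 = v by ring] at h2
  nlinarith [h1, h2]

lemma key_ineq {a b d : ℝ} (ha0 : 0 ≤ a) (hb0 : 0 ≤ b) (hd0 : 0 ≤ d)
    (ha : a ≤ 1/2) (hb : b ≤ 1/2) (hsum : d ≤ 1 - a - b) :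
    Real.sin (Real.pi * a) + Real.sin (Real.pi * b) ≤ 2 * Real.cos (Real.pi * d / 2) := by
  have hπ := Real.pi_pos
  rw [real_sin_add_sin]
  have h1 : Real.sin ((Real.pi * a + Real.pi * b) / 2) ≤ Real.cos (Real.pi * d / 2) := by
    have he : Real.sin ((Real.pi * a + Real.pi * b) / 2)
        = Real.cos (Real.pi / 2 - (Real.pi * a + Real.pi * b) / 2) := by
      rw [Real.cos_pi_div_two_sub]
    rw [he]
    apply Real.cos_le_cos_of_nonneg_of_le_pi
    · positivity
    · nlinarith
    · nlinarith
  have h2 : Real.cos ((Real.pi * a - Real.pi * b) / 2) ≤ 1 := Real.cos_le_one _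
  have h3 : 0 ≤ Real.sin ((Real.pi * a + Real.pi * b) / 2) := by
    apply Real.sin_nonneg_of_nonneg_of_le_pi <;> nlinarith
  have h4 : 0 ≤ Real.cos (Real.pi * d / 2) := le_trans h3 h1
  nlinarith

theorem stmt_4 (x x' ξ α' : ℝ) :
    ‖e (x + α') + e x‖ + ‖e (x' + ξ) + e x'‖
      ≤ 4 - 8 * Real.sin (Real.pi * |ξ - α' - round (ξ - α')| / 4) ^ 2 := by
  have hπ := Real.pi_pos
  set d : ℝ := |ξ - α' - round (ξ - α')| with hd
  have hd0 : 0 ≤ d := abs_nonneg _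
  have hd2 : d ≤ 1/2 := abs_sub_round _
  rw [abs_e_add, abs_e_add, abs_cos_eq, abs_cos_eq]
  set a : ℝ := |α' + 1/2 - round (α' + 1/2)| with ha
  set b : ℝ := |ξ + 1/2 - round (ξ + 1/2)| with hb
  have ha0 : 0 ≤ a := abs_nonneg _
  have hb0 : 0 ≤ b := abs_nonneg _
  have ha2 : a ≤ 1/2 := abs_sub_round _
  have hb2 : b ≤ 1/2 := abs_sub_round _
  clear_value d a b
  have hsum : d ≤ 1 - a - b := by
    set m₁ : ℤ := round (ξ + 1/2)
    set m₂ : ℤ := round (α' + 1/2)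
    set p : ℝ := ξ + 1/2 - m₁ with hp
    set q : ℝ := α' + 1/2 - m₂ with hq
    have hbp : b = |p| := hb
    have haq : a = |q| := ha
    have e1 : d ≤ |p - q| := by
      have h := round_le (ξ - α') (m₁ - m₂)
      rw [← hd] at h
      calc d ≤ |ξ - α' - ((m₁ - m₂ : ℤ) : ℝ)| := h
        _ = |p - q| := by rw [hp, hq]; push_cast; ring_nf
    have e2 : d ≤ |p - q - 1| := by
      have h := round_le (ξ - α') (m₁ - m₂ + 1)
      rw [← hd] at h
      calc d ≤ |ξ - α' - ((m₁ - m₂ + 1 : ℤ) : ℝ)| := h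
        _ = |p - q - 1| := by rw [hp, hq]; push_cast; ring_nf
    have e3 : d ≤ |p - q + 1| := by
      have h := round_le (ξ - α') (m₁ - m₂ - 1)
      rw [← hd] at h
      calc d ≤ |ξ - α' - ((m₁ - m₂ - 1 : ℤ) : ℝ)| := h
        _ = |p - q + 1| := by rw [hp, hq]; push_cast; ring_nf
    clear_value p q m₁ m₂
    rw [hbp] at hb0 hb2 ⊢
    rw [haq] at ha0 ha2 ⊢
    rcases abs_cases p with ⟨hp1, hp2⟩ | ⟨hp1, hp2⟩ <;>
      rcases abs_cases q with ⟨hq1, hq2⟩ | ⟨hq1, hq2⟩ <;>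
      rcases abs_cases (p - q) with ⟨h1, _⟩ | ⟨h1, _⟩ <;>
      rcases abs_cases (p - q - 1) with ⟨h2, _⟩ | ⟨h2, _⟩ <;>
      rcases abs_cases (p - q + 1) with ⟨h3, _⟩ | ⟨h3, _⟩ <;>
      linarith
  have key := key_ineq ha0 hb0 hd0 ha2 hb2 hsum
  have hcos : Real.cos (Real.pi * d / 2) = 1 - 2 * Real.sin (Real.pi * d / 4) ^ 2 := by
    have h2 := Real.sin_sq_add_cos_sq (Real.pi * d / 4)
    have h3 := Real.cos_two_mul (Real.pi * d / 4)
    rw [show 2 * (Real.pi * d / 4) = Real.pi * d / 2 by ring] at h3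
    linarith
  nlinarith
end

section
/- Let q ≥ 2, β ≥ 2 and ρ, λ, κ nonnegative integers with ρ < λ and κ ≥ 1. Let a : ℕ → ℤ be a β-recursive sequence with propagation function g, α ∈ ℝ, f(n) = exp(2πi α a(n)), and f^{(λ)}(n) = exp(2πi α a(n mod q^λ)). Let l > q^ρ and k₁ < q^κ be integers. Suppose there exists m with 0 ≤ m < ρ - β + 2 such that ε_{κ+m}(l q^κ + k₁) ≠ q-1, and letting i be the smallest such m, suppose there exists j with i + β - 2 < j < ρ and ε_{κ+j}(l q^κ + k₁) ≠ 0. Then for every integer k₂ < q^κ, f(l q^κ + k₁ + k₂)·conj(f(l q^κ + k₁)) = f^{(κ+ρ)}(l q^κ + k₁ + k₂)·conj(f^{(κ+ρ)}(l q^κ + k₁)). -/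
/-- The `i`-th digit of `n` in base `q`. -/
def digit (q i n : ℕ) : ℕ := n / q ^ i % q

lemma digit_lt (q i n : ℕ) (hq : 0 < q) : digit q i n < q := Nat.mod_lt _ hq

lemma digit_div (q s t n : ℕ) : digit q t (n / q ^ s) = digit q (s + t) n := by
  unfold digit
  rw [Nat.div_div_eq_div_mul, ← pow_add]

lemma digit_mod (q p μ n : ℕ) (h : p < μ) :
    digit q p (n % q ^ μ) = digit q p n := by
  unfold digit
  have : q ^ μ = q ^ p * q ^ (μ - p) := by rw [← pow_add]; congr 1; omega
  rw [this, Nat.mod_mul_right_div_self, Nat.mod_mod_of_dvd]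
  exact dvd_pow_self q (by omega)

lemma sum_digit (q n : ℕ) : ∀ m, ∑ t : Fin m, digit q (t : ℕ) n * q ^ (t : ℕ) = n % q ^ m := by
  intro m
  induction m with
  | zero => simp [Nat.mod_one]
  | succ m ih =>
      rw [Fin.sum_univ_castSucc]
      simp only [Fin.coe_castSucc, Fin.val_last, ih]
      have h : q ^ (m + 1) = q ^ m * q := by ring
      rw [h, Nat.mod_mul]
      unfold digit
      ring

section
variable (q β : ℕ) (hq : 2 ≤ q) (hβ : 2 ≤ β)
    (a : ℕ → ℤ) (g : (Fin β → ℕ) → ℕ)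
    (hrec : ∀ n : ℕ, 1 ≤ n → ∀ ω : Fin β → ℕ, (∀ i, ω i < q) →
      a (q ^ β * n + ∑ i : Fin β, ω i * q ^ (i : ℕ)) =
        a (q ^ (β - 1) * n +
            ∑ i : Fin (β - 1), ω ⟨i.val + 1, by have := i.isLt; omega⟩ * q ^ (i : ℕ)) + g ω)
    (hrec0 : ∀ ω : Fin β → ℕ, (∀ i, ω i < q) → ω ⟨β - 1, by omega⟩ ≠ 0 →
      a (∑ i : Fin β, ω i * q ^ (i : ℕ)) =
        a (∑ i : Fin (β - 1), ω ⟨i.val + 1, by have := i.isLt; omega⟩ * q ^ (i : ℕ)) + g ω)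

include hq hβ hrec hrec0 in
lemma step (n : ℕ) (hn : q ^ (β - 1) ≤ n) :
    a n = a (n / q) + g (fun t => digit q (t : ℕ) n) := by
  have hq0 : 0 < q := by omega
  set ω : Fin β → ℕ := fun t => digit q (t : ℕ) n with hωdef
  have hω : ∀ t, ω t < q := fun t => digit_lt _ _ _ hq0
  have hsum : ∑ t : Fin β, ω t * q ^ (t : ℕ) = n % q ^ β := sum_digit q n β
  have hterm : ∀ t : Fin (β - 1),
      ω ⟨(t : ℕ) + 1, by have := t.isLt; omega⟩ = digit q (t : ℕ) (n / q) := by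
    intro t
    have : n / q = n / q ^ 1 := by rw [pow_one]
    rw [this, digit_div]
    show digit q ((t : ℕ) + 1) n = digit q (1 + (t : ℕ)) n
    rw [Nat.add_comm]
  have hsum' : ∑ t : Fin (β - 1), ω ⟨(t : ℕ) + 1, by have := t.isLt; omega⟩ * q ^ (t : ℕ)
      = (n / q) % q ^ (β - 1) := by
    rw [Finset.sum_congr rfl (fun t _ => by rw [hterm t])]
    exact sum_digit q (n / q) (β - 1)
  have hpow1 : q * q ^ (β - 1) = q ^ β := by
    rw [← pow_succ']; congr 1; omega
  have hpow2 : q ^ (β - 1) * q = q ^ β := by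
    rw [← pow_succ]; congr 1; omega
  rcases le_or_gt (q ^ β) n with h | h
  · have hm : 1 ≤ n / q ^ β := (Nat.one_le_div_iff (by positivity)).mpr h
    have key := hrec (n / q ^ β) hm ω hω
    have e1 : q ^ β * (n / q ^ β) + n % q ^ β = n := Nat.div_add_mod n (q ^ β)
    have e2 : q ^ (β - 1) * (n / q ^ β) + (n / q) % q ^ (β - 1) = n / q := by
      have hd : n / q ^ β = n / q / q ^ (β - 1) := by
        rw [Nat.div_div_eq_div_mul, hpow1]
      rw [hd]
      exact Nat.div_add_mod _ _
    rw [hsum, e1, hsum', e2] at key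
    exact key
  · have htop : ω ⟨β - 1, by omega⟩ ≠ 0 := by
      have h1 : 1 ≤ n / q ^ (β - 1) := (Nat.one_le_div_iff (by positivity)).mpr hn
      have h2 : n / q ^ (β - 1) < q := by
        rw [Nat.div_lt_iff_lt_mul (by positivity), hpow1]; exact h
      show digit q (β - 1) n ≠ 0
      unfold digit
      rw [Nat.mod_eq_of_lt h2]
      omega
    have key := hrec0 ω hω htop
    have e1 : n % q ^ β = n := Nat.mod_eq_of_lt h
    have e2 : (n / q) % q ^ (β - 1) = n / q := by
      apply Nat.mod_eq_of_lt
      rw [Nat.div_lt_iff_lt_mul (by omega), hpow2]; exact h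
    rw [hsum, e1, hsum', e2] at key
    exact key

include hq hβ hrec hrec0 in
lemma iter : ∀ T n, (∀ s, s < T → q ^ (β - 1) ≤ n / q ^ s) →
    a n = a (n / q ^ T) +
      ∑ s ∈ Finset.range T, (g (fun t => digit q (s + (t : ℕ)) n) : ℤ) := by
  intro T
  induction T with
  | zero => intro n _; simp
  | succ T ih =>
      intro n hn
      have h1 := ih n (fun s hs => hn s (by omega))
      have h2 := step q β hq hβ a g hrec hrec0 (n / q ^ T) (hn T (by omega))
      have e1 : n / q ^ T / q = n / q ^ (T + 1) := by
        rw [Nat.div_div_eq_div_mul, ← pow_succ]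
      have e2 : (fun t : Fin β => digit q (t : ℕ) (n / q ^ T))
          = fun t : Fin β => digit q (T + (t : ℕ)) n := by
        funext t; rw [digit_div]
      rw [e1, e2] at h2
      rw [Finset.sum_range_succ, h1, h2]
      ring
end

theorem stmt_11 (q β ρ lam κ : ℕ) (hq : 2 ≤ q) (hβ : 2 ≤ β)
    (hlt : ρ < lam) (hκ : 1 ≤ κ)
    (a : ℕ → ℤ) (g : (Fin β → ℕ) → ℕ)
    (hrec : ∀ n : ℕ, 1 ≤ n → ∀ ω : Fin β → ℕ, (∀ i, ω i < q) →
      a (q ^ β * n + ∑ i : Fin β, ω i * q ^ (i : ℕ)) =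
        a (q ^ (β - 1) * n +
            ∑ i : Fin (β - 1), ω ⟨i.val + 1, by have := i.isLt; omega⟩ * q ^ (i : ℕ)) + g ω)
    (hrec0 : ∀ ω : Fin β → ℕ, (∀ i, ω i < q) → ω ⟨β - 1, by omega⟩ ≠ 0 →
      a (∑ i : Fin β, ω i * q ^ (i : ℕ)) =
        a (∑ i : Fin (β - 1), ω ⟨i.val + 1, by have := i.isLt; omega⟩ * q ^ (i : ℕ)) + g ω)
    (α : ℝ) (f : ℕ → ℂ)
    (hf : ∀ n, f n = Complex.exp (2 * Real.pi * Complex.I * α * a n))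
    (ftr : ℕ → ℕ → ℂ)
    (hftr : ∀ μ n, ftr μ n = Complex.exp (2 * Real.pi * Complex.I * α * a (n % q ^ μ)))
    (l k₁ : ℕ) (hl : q ^ ρ < l) (hk₁ : k₁ < q ^ κ)
    (i : ℕ) (hi : i < ρ - β + 2)
    (hdi : digit q (κ + i) (l * q ^ κ + k₁) ≠ q - 1)
    (hmin : ∀ m < i, digit q (κ + m) (l * q ^ κ + k₁) = q - 1)
    (j : ℕ) (hj₁ : i + β - 2 < j) (hj₂ : j < ρ)
    (hdj : digit q (κ + j) (l * q ^ κ + k₁) ≠ 0) :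
    ∀ k₂ : ℕ, k₂ < q ^ κ →
      f (l * q ^ κ + k₁ + k₂) * (starRingEnd ℂ) (f (l * q ^ κ + k₁)) =
        ftr (κ + ρ) (l * q ^ κ + k₁ + k₂) * (starRingEnd ℂ) (ftr (κ + ρ) (l * q ^ κ + k₁)) := by
  intro k₂ hk₂
  have hq0 : 0 < q := by omega
  have hqpow : ∀ m : ℕ, 0 < q ^ m := fun m => pow_pos hq0 m
  set N := l * q ^ κ + k₁ with hN
  set μ := κ + ρ with hμ
  set M := N % q ^ μ with hM
  set T := κ + i + 1 with hT
  have hijρ : i + β ≤ ρ := by omega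
  have hNbig : q ^ μ ≤ N := by
    have h1 : q ^ μ = q ^ ρ * q ^ κ := by rw [hμ, add_comm, pow_add]
    have h2 : q ^ ρ * q ^ κ ≤ l * q ^ κ := Nat.mul_le_mul_right _ (by omega)
    omega
  have hdi2 : digit q (κ + i) N ≤ q - 2 := by
    have := digit_lt q (κ + i) N hq0; omega
  have hmodT : N % q ^ T + q ^ κ ≤ q ^ T := by
    have hTsplit : q ^ T = q ^ (κ + i) * q := by rw [hT, pow_succ]
    have h1 : N % q ^ T = N % q ^ (κ + i) + q ^ (κ + i) * digit q (κ + i) N := by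
      rw [hTsplit, Nat.mod_mul]; rfl
    have f1 : N % q ^ (κ + i) < q ^ (κ + i) := Nat.mod_lt _ (hqpow _)
    have f2 : q ^ (κ + i) * digit q (κ + i) N ≤ q ^ (κ + i) * (q - 2) :=
      Nat.mul_le_mul_left _ hdi2
    have f3 : q ^ (κ + i) * (q - 2) + 2 * q ^ (κ + i) = q ^ (κ + i) * q := by
      have h2 : q ^ (κ + i) * (q - 2) + 2 * q ^ (κ + i) = q ^ (κ + i) * (q - 2 + 2) := by ring
      rw [h2]
      congr 1
      omega
    have f4 : q ^ κ ≤ q ^ (κ + i) := Nat.pow_le_pow_right hq0 (by omega)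
    omega
  have hcarry : N % q ^ T + k₂ < q ^ T := by omega
  have hMk2 : M + k₂ < q ^ μ := by
    have hμsplit : q ^ μ = q ^ T * q ^ (μ - T) := by rw [← pow_add]; congr 1; omega
    have decomp : M = N % q ^ T + q ^ T * (N / q ^ T % q ^ (μ - T)) := by
      rw [hM, hμsplit, Nat.mod_mul]
    set X := N / q ^ T % q ^ (μ - T) with hX
    have hXlt : X < q ^ (μ - T) := Nat.mod_lt _ (hqpow _)
    have hmul : q ^ T * (X + 1) ≤ q ^ T * q ^ (μ - T) := Nat.mul_le_mul_left _ (by omega)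
    have hmul2 : q ^ T * (X + 1) = q ^ T * X + q ^ T := by ring
    omega
  have hk₂μ : k₂ < q ^ μ := lt_of_lt_of_le hk₂ (Nat.pow_le_pow_right hq0 (by omega))
  have hNk2mod : (N + k₂) % q ^ μ = M + k₂ := by
    rw [Nat.add_mod, ← hM, Nat.mod_eq_of_lt hk₂μ, Nat.mod_eq_of_lt hMk2]
  have hdivN : (N + k₂) / q ^ T = N / q ^ T := by
    have hsplit : N + k₂ = q ^ T * (N / q ^ T) + (N % q ^ T + k₂) := by
      rw [← add_assoc, Nat.div_add_mod]
    rw [hsplit, Nat.mul_add_div (hqpow T), Nat.div_eq_of_lt hcarry, add_zero]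
  have hMmodT : M % q ^ T = N % q ^ T := by
    rw [hM, Nat.mod_mod_of_dvd _ (pow_dvd_pow q (by omega))]
  have hdivM : (M + k₂) / q ^ T = M / q ^ T := by
    have hsplit : M + k₂ = q ^ T * (M / q ^ T) + (M % q ^ T + k₂) := by
      rw [← add_assoc, Nat.div_add_mod]
    have h5 : M % q ^ T + k₂ < q ^ T := by omega
    rw [hsplit, Nat.mul_add_div (hqpow T), Nat.div_eq_of_lt h5, add_zero]
  have hdigN : ∀ p, p < μ → digit q p M = digit q p N := fun p hp => digit_mod q p μ N hp
  have hdigNk : ∀ p, p < μ → digit q p (M + k₂) = digit q p (N + k₂) := by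
    intro p hp
    rw [← hNk2mod]
    exact digit_mod q p μ (N + k₂) hp
  have hMj : q ^ (κ + j) ≤ M := by
    by_contra h
    push_neg at h
    have hz : digit q (κ + j) M = 0 := by
      unfold digit; rw [Nat.div_eq_of_lt h, Nat.zero_mod]
    rw [hdigN (κ + j) (by omega)] at hz
    exact hdj hz
  have hsizeN : ∀ s, s < T → q ^ (β - 1) ≤ N / q ^ s := by
    intro s hs
    apply (Nat.le_div_iff_mul_le (hqpow s)).mpr
    calc q ^ (β - 1) * q ^ s = q ^ (β - 1 + s) := by rw [pow_add]
      _ ≤ q ^ μ := Nat.pow_le_pow_right hq0 (by omega)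
      _ ≤ N := hNbig
  have hsizeNk : ∀ s, s < T → q ^ (β - 1) ≤ (N + k₂) / q ^ s := fun s hs =>
    le_trans (hsizeN s hs) (Nat.div_le_div_right (by omega))
  have hsizeM : ∀ s, s < T → q ^ (β - 1) ≤ M / q ^ s := by
    intro s hs
    apply (Nat.le_div_iff_mul_le (hqpow s)).mpr
    calc q ^ (β - 1) * q ^ s = q ^ (β - 1 + s) := by rw [pow_add]
      _ ≤ q ^ (κ + j) := Nat.pow_le_pow_right hq0 (by omega)
      _ ≤ M := hMj
  have hsizeMk : ∀ s, s < T → q ^ (β - 1) ≤ (M + k₂) / q ^ s := fun s hs =>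
    le_trans (hsizeM s hs) (Nat.div_le_div_right (by omega))
  have eN := iter q β hq hβ a g hrec hrec0 T N hsizeN
  have eNk := iter q β hq hβ a g hrec hrec0 T (N + k₂) hsizeNk
  have eM := iter q β hq hβ a g hrec hrec0 T M hsizeM
  have eMk := iter q β hq hβ a g hrec hrec0 T (M + k₂) hsizeMk
  have hS1 : ∑ s ∈ Finset.range T, (g (fun t => digit q (s + (t : ℕ)) (N + k₂)) : ℤ)
      = ∑ s ∈ Finset.range T, (g (fun t => digit q (s + (t : ℕ)) (M + k₂)) : ℤ) := by
    refine Finset.sum_congr rfl fun s hs => ?_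
    rw [Finset.mem_range] at hs
    have hfun : (fun t : Fin β => digit q (s + (t : ℕ)) (N + k₂))
        = fun t : Fin β => digit q (s + (t : ℕ)) (M + k₂) :=
      funext fun t => (hdigNk (s + (t : ℕ)) (by have := t.isLt; omega)).symm
    rw [hfun]
  have hS2 : ∑ s ∈ Finset.range T, (g (fun t => digit q (s + (t : ℕ)) N) : ℤ)
      = ∑ s ∈ Finset.range T, (g (fun t => digit q (s + (t : ℕ)) M) : ℤ) := by
    refine Finset.sum_congr rfl fun s hs => ?_
    rw [Finset.mem_range] at hs
    have hfun : (fun t : Fin β => digit q (s + (t : ℕ)) N)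
        = fun t : Fin β => digit q (s + (t : ℕ)) M :=
      funext fun t => (hdigN (s + (t : ℕ)) (by have := t.isLt; omega)).symm
    rw [hfun]
  have key : a (N + k₂) + a M = a (M + k₂) + a N := by
    rw [eNk, eM, eMk, eN, hdivN, hdivM, hS1, hS2]
    ring
  rw [hf, hf, hftr, hftr, hNk2mod, ← hM]
  have hconj : ∀ x : ℤ, (starRingEnd ℂ) (Complex.exp (2 * Real.pi * Complex.I * α * x))
      = Complex.exp (-(2 * Real.pi * Complex.I * α * x)) := by
    intro x
    rw [← Complex.exp_conj]
    congr 1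
    simp only [map_mul, map_ofNat, Complex.conj_ofReal, Complex.conj_I, map_intCast]
    ring
  rw [hconj, hconj, ← Complex.exp_add, ← Complex.exp_add]
  congr 1
  have hc := congrArg (fun z : ℤ => (z : ℂ)) key
  push_cast at hc
  linear_combination (2 * (Real.pi : ℂ) * Complex.I * (α : ℂ)) * hc
end

section
/- Let q ≥ 2 and β ≥ 2, and fix ρ ≥ β. For q^ρ ≤ l < q^λ, define B_i (for 0 ≤ i ≤ ρ - β + 1) as the set of such l with ε_i(l) ≠ q-1, ε_m(l) = q-1 for all m < i, and ε_j(l) = 0 for all j with i + β - 2 < j < ρ. Then all sets B_i have the same cardinality, namely #B_i = #B_0 for each 0 ≤ i ≤ ρ - β + 1. -/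
lemma mod_pow_succ (q j a : ℕ) :
    a % q ^ (j + 1) = a % q ^ j + q ^ j * digit q j a := by
  rw [digit, pow_succ, Nat.mod_mul]

lemma pred_mul_decomp {c X : ℕ} (hc : 0 < c) (hX : 1 ≤ X) :
    X * c - 1 = (c - 1) + (X - 1) * c := by
  rw [Nat.sub_mul, one_mul]
  have h : c ≤ X * c := Nat.le_mul_of_pos_left c hX
  omega

lemma pred_mul_div {c X : ℕ} (hc : 0 < c) (hX : 1 ≤ X) :
    (X * c - 1) / c = X - 1 := by
  rw [pred_mul_decomp hc hX, Nat.add_mul_div_right _ _ hc,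
    Nat.div_eq_of_lt (by omega), zero_add]

lemma pred_mul_mod {c X : ℕ} (hc : 0 < c) (hX : 1 ≤ X) :
    (X * c - 1) % c = c - 1 := by
  rw [pred_mul_decomp hc hX, Nat.add_mul_mod_self_right,
    Nat.mod_eq_of_lt (by omega)]

lemma mod_of_low_digits {q : ℕ} (hq : 0 < q) {l : ℕ} :
    ∀ i : ℕ, (∀ m < i, digit q m l = q - 1) → l % q ^ i = q ^ i - 1 := by
  intro i
  induction i with
  | zero => intro _; simp only [pow_zero]; omega
  | succ n ih =>
    intro h
    rw [mod_pow_succ, ih (fun m hm => h m (by omega)), h n (by omega)]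
    have h1 : 1 ≤ q ^ n := Nat.one_le_pow _ _ hq
    have h2 : q ^ n * (q - 1) = q ^ n * q - q ^ n := by
      rw [Nat.mul_sub, mul_one]
    have h3 : q ^ n ≤ q ^ n * q := Nat.le_mul_of_pos_right _ hq
    rw [pow_succ, h2]
    set a := q ^ n
    set b := a * q
    omega

lemma mod_of_zero_digits {q : ℕ} {l s : ℕ} :
    ∀ t : ℕ, s ≤ t → (∀ j, s ≤ j → j < t → digit q j l = 0) →
      l % q ^ t = l % q ^ s := by
  intro t
  induction t with
  | zero => intro hs _; interval_cases s; rfl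
  | succ n ih =>
    intro hs h
    rcases Nat.lt_or_ge s (n + 1) with hl | hg
    · rw [mod_pow_succ, h n (by omega) (by omega), mul_zero, add_zero]
      exact ih (by omega) fun j h1 h2 => h j h1 (by omega)
    · have : s = n + 1 := by omega
      rw [this]

lemma digit_add_high {q : ℕ} (hq : 0 < q) {j ρ : ℕ} (hj : j < ρ) (h low : ℕ) :
    digit q j (h * q ^ ρ + low) = digit q j low := by
  unfold digit
  have hpow : q ^ ρ = q ^ (ρ - j - 1) * (q * q ^ j) := by
    rw [← pow_succ', ← pow_add]
    congr 1
    omega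
  have e : h * q ^ ρ + low = low + h * q ^ (ρ - j - 1) * q * q ^ j := by
    rw [hpow]; ring
  rw [e, Nat.add_mul_div_right _ _ (pow_pos hq j), Nat.add_mul_mod_self_right]

lemma digit_low {q : ℕ} (hq : 2 ≤ q) {j i : ℕ} (hj : j < i) (m : ℕ) :
    digit q j (q ^ i - 1 + m * q ^ i) = q - 1 := by
  have hqi : 1 ≤ q ^ i := Nat.one_le_pow _ _ (by omega)
  have e : q ^ i - 1 + m * q ^ i = (m + 1) * q ^ i - 1 := by
    rw [add_one_mul]
    set a := q ^ i
    set b := m * a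
    omega
  unfold digit
  rw [e]
  have e2 : (m + 1) * q ^ i = ((m + 1) * q ^ (i - j)) * q ^ j := by
    rw [mul_assoc, ← pow_add]
    congr 2
    omega
  rw [e2, pred_mul_div (pow_pos (by omega) j)
    (Nat.one_le_iff_ne_zero.mpr (by positivity))]
  have e3 : (m + 1) * q ^ (i - j) = ((m + 1) * q ^ (i - j - 1)) * q := by
    rw [mul_assoc, ← pow_succ]
    congr 2
    omega
  rw [e3]
  exact pred_mul_mod (by omega) (Nat.one_le_iff_ne_zero.mpr (by positivity))

lemma digit_mid {q : ℕ} (hq : 2 ≤ q) (i m : ℕ) :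
    digit q i (q ^ i - 1 + m * q ^ i) = m % q := by
  unfold digit
  rw [Nat.add_mul_div_right _ _ (pow_pos (by omega) i),
    Nat.div_eq_of_lt (by have := Nat.one_le_pow i q (by omega); omega),
    zero_add]

lemma digit_of_lt {q j low : ℕ} (h : low < q ^ j) : digit q j low = 0 := by
  unfold digit
  rw [Nat.div_eq_of_lt h, Nat.zero_mod]

/-- Both `B_i` and `B_0` are in bijection with this product-like index set. -/
lemma key_card (q β ρ lam : ℕ) (hq : 2 ≤ q) (hβ : 2 ≤ β) (hlt : ρ < lam)
    (i : ℕ) (hi : i + β - 1 ≤ ρ) :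
    {l : ℕ | q ^ ρ ≤ l ∧ l < q ^ lam ∧ digit q i l ≠ q - 1 ∧
        (∀ m < i, digit q m l = q - 1) ∧
        ∀ j, i + β - 2 < j → j < ρ → digit q j l = 0}.ncard
      = {p : ℕ × ℕ | 1 ≤ p.1 ∧ p.1 < q ^ (lam - ρ) ∧ p.2 < q ^ (β - 1) ∧
          p.2 % q ≠ q - 1}.ncard := by
  have hq0 : 0 < q := by omega
  set S : Set (ℕ × ℕ) := {p : ℕ × ℕ | 1 ≤ p.1 ∧ p.1 < q ^ (lam - ρ) ∧
    p.2 < q ^ (β - 1) ∧ p.2 % q ≠ q - 1} with hS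
  set g : ℕ × ℕ → ℕ := fun p => p.1 * q ^ ρ + (q ^ i - 1 + p.2 * q ^ i) with hg
  -- the "low part" is small
  have hlow : ∀ m : ℕ, m < q ^ (β - 1) → q ^ i - 1 + m * q ^ i < q ^ (i + (β - 1)) := by
    intro m hm
    have h1 : q ^ i - 1 + m * q ^ i < (m + 1) * q ^ i := by
      have hqi : 1 ≤ q ^ i := Nat.one_le_pow _ _ hq0
      rw [add_one_mul]
      set a := q ^ i
      set b := m * a
      omega
    calc q ^ i - 1 + m * q ^ i < (m + 1) * q ^ i := h1
      _ ≤ q ^ (β - 1) * q ^ i := Nat.mul_le_mul_right _ (by omega)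
      _ = q ^ (i + (β - 1)) := by rw [← pow_add, Nat.add_comm]
  have hlowρ : ∀ m : ℕ, m < q ^ (β - 1) → q ^ i - 1 + m * q ^ i < q ^ ρ := by
    intro m hm
    exact lt_of_lt_of_le (hlow m hm) (Nat.pow_le_pow_right hq0 (by omega))
  have himg : {l : ℕ | q ^ ρ ≤ l ∧ l < q ^ lam ∧ digit q i l ≠ q - 1 ∧
        (∀ m < i, digit q m l = q - 1) ∧
        ∀ j, i + β - 2 < j → j < ρ → digit q j l = 0} = g '' S := by
    ext l
    constructor
    · rintro ⟨h1, h2, h3, h4, h5⟩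
      refine ⟨(l / q ^ ρ, l / q ^ i % q ^ (β - 1)), ⟨?_, ?_, ?_, ?_⟩, ?_⟩
      · exact (Nat.one_le_div_iff (pow_pos hq0 ρ)).mpr h1
      · rw [Nat.div_lt_iff_lt_mul (pow_pos hq0 ρ), ← pow_add]
        calc l < q ^ lam := h2
          _ = q ^ (lam - ρ + ρ) := by congr 1; omega
      · exact Nat.mod_lt _ (pow_pos hq0 _)
      · rwa [Nat.mod_mod_of_dvd _ (dvd_pow_self q (by omega))]
      · -- g applied equals l
        show l / q ^ ρ * q ^ ρ + (q ^ i - 1 + l / q ^ i % q ^ (β - 1) * q ^ i) = l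
        have hm1 : l % q ^ i = q ^ i - 1 := mod_of_low_digits hq0 i h4
        have hm2 : l % q ^ ρ = l % q ^ (i + (β - 1)) :=
          mod_of_zero_digits (s := i + (β - 1)) ρ (by omega)
            (fun j hj1 hj2 => h5 j (by omega) hj2)
        have hm3 : l % q ^ (i + (β - 1)) =
            l % q ^ i + q ^ i * (l / q ^ i % q ^ (β - 1)) := by
          rw [pow_add, Nat.mod_mul]
        have := Nat.div_add_mod l (q ^ ρ)
        rw [hm2, hm3, hm1] at this
        rw [mul_comm (l / q ^ ρ) (q ^ ρ), mul_comm (l / q ^ i % q ^ (β - 1)) (q ^ i)]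
        exact this
    · rintro ⟨⟨h, m⟩, ⟨hp1, hp2, hp3, hp4⟩, rfl⟩
      have hl : q ^ i - 1 + m * q ^ i < q ^ ρ := hlowρ m hp3
      refine ⟨?_, ?_, ?_, ?_, ?_⟩
      · calc q ^ ρ = 1 * q ^ ρ := (one_mul _).symm
          _ ≤ h * q ^ ρ := Nat.mul_le_mul_right _ hp1
          _ ≤ _ := Nat.le_add_right _ _
      · calc g (h, m) < h * q ^ ρ + q ^ ρ := by
              simpa [hg] using Nat.add_lt_add_left hl (h * q ^ ρ)
          _ = (h + 1) * q ^ ρ := by ring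
          _ ≤ q ^ (lam - ρ) * q ^ ρ := Nat.mul_le_mul_right _ (by omega)
          _ = q ^ (lam - ρ + ρ) := by rw [← pow_add]
          _ = q ^ lam := by congr 1; omega
      · show digit q i (h * q ^ ρ + _) ≠ q - 1
        rw [digit_add_high hq0 (by omega) h, digit_mid hq]
        exact hp4
      · intro m' hm'
        show digit q m' (h * q ^ ρ + _) = q - 1
        rw [digit_add_high hq0 (by omega) h]
        exact digit_low hq hm' m
      · intro j hj1 hj2
        show digit q j (h * q ^ ρ + _) = 0
        rw [digit_add_high hq0 hj2 h]
        exact digit_of_lt (lt_of_lt_of_le (hlow m hp3)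
          (Nat.pow_le_pow_right hq0 (by omega)))
  have hinj : Set.InjOn g S := by
    rintro ⟨h1, m1⟩ ⟨hp1, _, hp3, _⟩ ⟨h2, m2⟩ ⟨hq1, _, hq3, _⟩ he
    have hl1 : q ^ i - 1 + m1 * q ^ i < q ^ ρ := hlowρ m1 hp3
    have hl2 : q ^ i - 1 + m2 * q ^ i < q ^ ρ := hlowρ m2 hq3
    simp only [hg] at he
    have hh : h1 = h2 := by
      have e1 : (h1 * q ^ ρ + (q ^ i - 1 + m1 * q ^ i)) / q ^ ρ = h1 := by
        rw [Nat.add_comm, Nat.add_mul_div_right _ _ (pow_pos hq0 ρ),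
          Nat.div_eq_of_lt hl1, zero_add]
      have e2 : (h2 * q ^ ρ + (q ^ i - 1 + m2 * q ^ i)) / q ^ ρ = h2 := by
        rw [Nat.add_comm, Nat.add_mul_div_right _ _ (pow_pos hq0 ρ),
          Nat.div_eq_of_lt hl2, zero_add]
      rw [← e1, ← e2, he]
    have hm : m1 = m2 := by
      have hqi : 1 ≤ q ^ i := Nat.one_le_pow _ _ hq0
      have := he
      rw [hh] at this
      have hlin : m1 * q ^ i = m2 * q ^ i := by
        set a := q ^ i
        set b1 := m1 * a
        set b2 := m2 * a
        omega
      exact Nat.eq_of_mul_eq_mul_right (pow_pos hq0 i) hlin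
    simp [hh, hm]
  rw [himg, Set.ncard_image_of_injOn hinj]

theorem stmt_18 (q β ρ lam : ℕ) (hq : 2 ≤ q) (hβ : 2 ≤ β)
    (hρ : β ≤ ρ) (hlt : ρ < lam) :
    ∀ i, i ≤ ρ - β + 1 →
      {l : ℕ | q ^ ρ ≤ l ∧ l < q ^ lam ∧ digit q i l ≠ q - 1 ∧
          (∀ m < i, digit q m l = q - 1) ∧
          ∀ j, i + β - 2 < j → j < ρ → digit q j l = 0}.ncard
        = {l : ℕ | q ^ ρ ≤ l ∧ l < q ^ lam ∧ digit q 0 l ≠ q - 1 ∧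
            (∀ m < 0, digit q m l = q - 1) ∧
            ∀ j, 0 + β - 2 < j → j < ρ → digit q j l = 0}.ncard := by
  intro i hi
  rw [key_card q β ρ lam hq hβ hlt i (by omega),
    key_card q β ρ lam hq hβ hlt 0 (by omega)]
end
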